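/- (Lemma 1, explicit-constant form: VC_r(Π) = O(d log H).) Let Π be a family of deterministic stopping policies with VC dimension at most d (as Boolean classifiers on List O), d ≥ 1, let g : List O → ℝ be a reward function, and let 𝓗 = { I(π, Δ) : π ∈ Π, Δ ∈ ℝ } be the associated indicator class on full trajectories, where I(π, Δ)(x) = true iff R_π(x) ≥ Δ. Then for every n ≥ 1, if 𝓗 shatters a set of n full trajectories of horizon H (H ≥ 1), then n ≤ 2·(d + 1)·log₂(2·e·(d + 1)·H). In other words, the real-valued VC dimension VC_r(Π) of Π, viewed as maps from full trajectories to returns, is at most 2·(d + 1)·log₂(2·e·(d + 1)·H). -/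

import Mathlib

open scoped BigOperators

/-- The `t`-prefix of a full trajectory `x : Fin H → O`, i.e. the list `[x 0, …, x (t-1)]`. -/
def trajPrefix {O : Type*} {H : ℕ} (x : Fin H → O) (t : ℕ) : List O :=
  (List.ofFn x).take t

open Classical in
/-- The stopping time of policy `π` on full trajectory `x`: the least `t` with
`1 ≤ t ≤ H` such that `π` halts on the `t`-prefix of `x`, and `H` if no such `t` exists. -/
noncomputable def stopTime {O : Type*} (H : ℕ) (π : List O → Bool) (x : Fin H → O) : ℕ :=
  if h : ∃ t, (1 ≤ t ∧ t ≤ H) ∧ π (trajPrefix x t) = true then Nat.find h else H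

/-- The return of policy `π` on full trajectory `x` under reward function `g`. -/
noncomputable def policyReturn {O : Type*} {H : ℕ} (g : List O → ℝ) (π : List O → Bool)
    (x : Fin H → O) : ℝ :=
  g (trajPrefix x (stopTime H π x))

/-- A family `Π` of policies shatters a finite set `S` of lists if every Boolean
labeling of `S` is realized by some member of `Π`. -/
def ShattersLists {O : Type*} (P : Set (List O → Bool)) (S : Finset (List O)) : Prop :=
  ∀ f : List O → Bool, ∃ π ∈ P, ∀ l ∈ S, π l = f l



-- sum of binomials bound
lemma sum_choose_le_pow (m d : ℕ) : ∑ k ∈ Finset.range (d+1), m.choose k ≤ (m+1)^d := by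
  induction d with
  | zero => simp
  | succ d ih =>
    rw [Finset.sum_range_succ]
    have h1 : m.choose (d+1) ≤ m^(d+1) := Nat.choose_le_pow m (d+1)
    have h2 : m^(d+1) ≤ m * (m+1)^d := by
      rw [pow_succ']
      exact Nat.mul_le_mul_left m (Nat.pow_le_pow_left (Nat.le_succ m) d)
    have h3 : (m+1)^(d+1) = (m+1)^d + m*(m+1)^d := by ring
    omega

-- log t ≤ t / e
lemma log_le_div_e {t : ℝ} (ht : 0 < t) : Real.log t ≤ t / Real.exp 1 := by
  have h := Real.log_le_sub_one_of_pos (x := t / Real.exp 1) (by positivity)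
  rw [Real.log_div (ne_of_gt ht) (by positivity), Real.log_exp] at h
  linarith

lemma stopTime_le {O : Type*} {H : ℕ} (hH : 1 ≤ H) (π : List O → Bool) (x : Fin H → O) :
    1 ≤ stopTime H π x ∧ stopTime H π x ≤ H := by
  unfold stopTime
  split
  · next h => exact ⟨(Nat.find_spec h).1.1, (Nat.find_spec h).1.2⟩
  · exact ⟨hH, le_rfl⟩

lemma return_congr {O : Type*} {H : ℕ} (g : List O → ℝ) (π π' : List O → Bool)
    (x : Fin H → O) (h : ∀ t, 1 ≤ t → t ≤ H → π (trajPrefix x t) = π' (trajPrefix x t)) :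
    policyReturn g π x = policyReturn g π' x := by
  have hiff : ∀ t, ((1 ≤ t ∧ t ≤ H) ∧ π (trajPrefix x t) = true) ↔
      ((1 ≤ t ∧ t ≤ H) ∧ π' (trajPrefix x t) = true) := by
    intro t
    by_cases ht : 1 ≤ t ∧ t ≤ H
    · rw [h t ht.1 ht.2]
    · simp [ht]
  have hst : stopTime H π x = stopTime H π' x := by
    unfold stopTime
    split
    · next he =>
      split
      · next he' =>
        exact le_antisymm (Nat.find_mono (fun t ht => (hiff t).mpr ht))
          (Nat.find_mono (fun t ht => (hiff t).mp ht))
      · next he' => exact absurd (⟨_, (hiff _).mp (Nat.find_spec he)⟩) he'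
    · next he =>
      split
      · next he' => exact absurd (⟨_, (hiff _).mpr (Nat.find_spec he')⟩) he
      · rfl
  unfold policyReturn
  rw [hst]
lemma counting {O : Type*} {H d : ℕ} (hH : 1 ≤ H)
    (P : Set (List O → Bool))
    (hVC : ∀ S : Finset (List O), S.card = d + 1 → ¬ ShattersLists P S)
    (g : List O → ℝ) (n : ℕ) (x : Fin n → (Fin H → O))
    (hsh : ∀ b : Fin n → Bool, ∃ π ∈ P, ∃ Δ : ℝ,
        ∀ i : Fin n, (b i = true ↔ Δ ≤ policyReturn g π (x i))) :
    2^n ≤ (n+1) * (n*H+1)^d := by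
  classical
  choose π hπP Δ hΔ using hsh
  set S : Finset (List O) := (Finset.univ : Finset (Fin n × Fin H)).image
      (fun p => trajPrefix (x p.1) ((p.2 : ℕ) + 1)) with hSdef
  have hScard : S.card ≤ n * H := le_trans Finset.card_image_le (by simp)
  have hmemS : ∀ (i : Fin n) (t : ℕ), 1 ≤ t → t ≤ H → trajPrefix (x i) t ∈ S := by
    intro i t h1 h2
    refine Finset.mem_image.mpr ⟨(i, ⟨t - 1, by omega⟩), Finset.mem_univ _, ?_⟩
    simp only
    congr 1
    omega
  set 𝒜 : Finset (Finset (List O)) := S.powerset.filter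
      (fun s => ∃ p ∈ P, ∀ l ∈ S, (p l = true ↔ l ∈ s)) with h𝒜
  -- every set shattered by 𝒜 has card ≤ d
  have hshat : ∀ t : Finset (List O), 𝒜.Shatters t → t.card ≤ d := by
    intro t ht
    by_contra hc
    push_neg at hc
    obtain ⟨t', ht'sub, ht'card⟩ := Finset.exists_subset_card_eq (s := t) (n := d+1) (by omega)
    have ht' : 𝒜.Shatters t' := ht.mono_right ht'sub
    refine hVC t' ht'card ?_
    intro f
    obtain ⟨s, hs𝒜, hst⟩ := ht' (Finset.filter_subset (fun l => f l = true) t')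
    have hs := Finset.mem_filter.mp hs𝒜
    obtain ⟨p, hpP, hp⟩ := hs.2
    obtain ⟨s₀, hs₀𝒜, hs₀⟩ := ht' (Finset.Subset.refl t')
    have ht'S : t' ⊆ S := by
      have h1 : t' ⊆ s₀ := Finset.inter_eq_left.mp hs₀
      exact h1.trans (Finset.mem_powerset.mp (Finset.mem_filter.mp hs₀𝒜).1)
    refine ⟨p, hpP, ?_⟩
    intro l hl
    have hlS : l ∈ S := ht'S hl
    have h2 : p l = true ↔ l ∈ s := hp l hlS
    have h3 : l ∈ s ↔ f l = true := by
      constructor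
      · intro h
        have : l ∈ t' ∩ s := Finset.mem_inter.mpr ⟨hl, h⟩
        rw [hst] at this
        exact (Finset.mem_filter.mp this).2
      · intro h
        have : l ∈ t'.filter (fun l => f l = true) := Finset.mem_filter.mpr ⟨hl, h⟩
        rw [← hst] at this
        exact (Finset.mem_inter.mp this).2
    have := h2.trans h3
    cases hpl : p l <;> cases hfl : f l <;> simp_all
  -- Sauer–Shelah bound on 𝒜
  have h𝒜card : 𝒜.card ≤ (n*H+1)^d := by
    have h1 : 𝒜.card ≤ 𝒜.shatterer.card := Finset.card_le_card_shatterer 𝒜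
    have h2 : 𝒜.shatterer ⊆ (Finset.range (d+1)).biUnion (fun k => S.powersetCard k) := by
      intro t htmem
      have ht : 𝒜.Shatters t := Finset.mem_shatterer.mp htmem
      obtain ⟨s, hs𝒜, hts⟩ := ht.exists_superset
      have htS : t ⊆ S := hts.trans (Finset.mem_powerset.mp (Finset.mem_filter.mp hs𝒜).1)
      exact Finset.mem_biUnion.mpr ⟨t.card, Finset.mem_range.mpr (by
        have := hshat t ht; omega), Finset.mem_powersetCard.mpr ⟨htS, rfl⟩⟩
    have h3 : ((Finset.range (d+1)).biUnion (fun k => S.powersetCard k)).card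
        ≤ ∑ k ∈ Finset.range (d+1), S.card.choose k := by
      refine le_trans (Finset.card_biUnion_le) ?_
      exact Finset.sum_le_sum (fun k _ => le_of_eq (Finset.card_powersetCard k S))
    have h4 : ∑ k ∈ Finset.range (d+1), S.card.choose k ≤ (S.card+1)^d :=
      sum_choose_le_pow S.card d
    have h5 : (S.card+1)^d ≤ (n*H+1)^d := Nat.pow_le_pow_left (by omega) d
    exact le_trans h1 (le_trans (Finset.card_le_card h2) (le_trans h3 (le_trans h4 h5)))
  -- the injection
  set Φ : (Fin n → Bool) → Finset (List O) × ℕ := fun b =>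
    (S.filter (fun l => π b l = true),
     (Finset.univ.filter (fun i => Δ b ≤ policyReturn g (π b) (x i))).card) with hΦ
  have hagree : ∀ b b' : Fin n → Bool,
      S.filter (fun l => π b l = true) = S.filter (fun l => π b' l = true) →
      ∀ i, policyReturn g (π b) (x i) = policyReturn g (π b') (x i) := by
    intro b b' hfil i
    apply return_congr
    intro t h1 h2
    have hm := hmemS i t h1 h2
    have hiff : π b (trajPrefix (x i) t) = true ↔ π b' (trajPrefix (x i) t) = true := by
      constructor
      · intro hh
        have : trajPrefix (x i) t ∈ S.filter (fun l => π b l = true) :=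
          Finset.mem_filter.mpr ⟨hm, hh⟩
        rw [hfil] at this
        exact (Finset.mem_filter.mp this).2
      · intro hh
        have : trajPrefix (x i) t ∈ S.filter (fun l => π b' l = true) :=
          Finset.mem_filter.mpr ⟨hm, hh⟩
        rw [← hfil] at this
        exact (Finset.mem_filter.mp this).2
    cases h1 : π b (trajPrefix (x i) t) <;> cases h2 : π b' (trajPrefix (x i) t) <;> simp_all
  have hkey : ∀ b b' : Fin n → Bool, Φ b = Φ b' → Δ b ≤ Δ b' → b = b' := by
    intro b b' hΦeq hle
    have hfil : S.filter (fun l => π b l = true) = S.filter (fun l => π b' l = true) :=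
      congrArg Prod.fst hΦeq
    have hcnt : (Finset.univ.filter (fun i => Δ b ≤ policyReturn g (π b) (x i))).card
        = (Finset.univ.filter (fun i => Δ b' ≤ policyReturn g (π b') (x i))).card :=
      congrArg Prod.snd hΦeq
    have hr := hagree b b' hfil
    have hU'U : Finset.univ.filter (fun i => Δ b' ≤ policyReturn g (π b') (x i))
        ⊆ Finset.univ.filter (fun i => Δ b ≤ policyReturn g (π b) (x i)) := by
      intro i hi
      have := (Finset.mem_filter.mp hi).2
      refine Finset.mem_filter.mpr ⟨Finset.mem_univ _, ?_⟩
      rw [hr i]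
      linarith
    have hUeq : Finset.univ.filter (fun i => Δ b' ≤ policyReturn g (π b') (x i))
        = Finset.univ.filter (fun i => Δ b ≤ policyReturn g (π b) (x i)) :=
      Finset.eq_of_subset_of_card_le hU'U (le_of_eq hcnt)
    funext i
    have hb : b i = true ↔ Δ b ≤ policyReturn g (π b) (x i) := hΔ b i
    have hb' : b' i = true ↔ Δ b' ≤ policyReturn g (π b') (x i) := hΔ b' i
    have hmem : Δ b ≤ policyReturn g (π b) (x i) ↔ Δ b' ≤ policyReturn g (π b') (x i) := by
      constructor
      · intro h
        have : i ∈ Finset.univ.filter (fun i => Δ b ≤ policyReturn g (π b) (x i)) :=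
          Finset.mem_filter.mpr ⟨Finset.mem_univ _, h⟩
        rw [← hUeq] at this
        exact (Finset.mem_filter.mp this).2
      · intro h
        exact (Finset.mem_filter.mp (hU'U (Finset.mem_filter.mpr ⟨Finset.mem_univ _, h⟩))).2
    have := (hb.trans hmem).trans hb'.symm
    cases h1 : b i <;> cases h2 : b' i <;> simp_all
  have hinj : Function.Injective Φ := by
    intro b b' h
    rcases le_total (Δ b) (Δ b') with hle | hle
    · exact hkey b b' h hle
    · exact (hkey b' b h.symm hle).symm
  have hmaps : ∀ b : Fin n → Bool, Φ b ∈ 𝒜 ×ˢ Finset.range (n+1) := by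
    intro b
    refine Finset.mem_product.mpr ⟨?_, ?_⟩
    · refine Finset.mem_filter.mpr ⟨Finset.mem_powerset.mpr (Finset.filter_subset _ _), ?_⟩
      refine ⟨π b, hπP b, ?_⟩
      intro l hl
      exact ⟨fun h => Finset.mem_filter.mpr ⟨hl, h⟩, fun h => (Finset.mem_filter.mp h).2⟩
    · show (Finset.univ.filter (fun i => Δ b ≤ policyReturn g (π b) (x i))).card
          ∈ Finset.range (n+1)
      refine Finset.mem_range.mpr ?_
      have := Finset.card_filter_le (Finset.univ : Finset (Fin n))
        (fun i => Δ b ≤ policyReturn g (π b) (x i))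
      simp only [Finset.card_univ, Fintype.card_fin] at this
      omega
  have hcard : (Finset.univ : Finset (Fin n → Bool)).card ≤ (𝒜 ×ˢ Finset.range (n+1)).card :=
    Finset.card_le_card_of_injOn Φ (fun b _ => hmaps b) (Function.Injective.injOn hinj)
  have h2n : (Finset.univ : Finset (Fin n → Bool)).card = 2^n := by
    simp [Finset.card_univ]
  rw [h2n, Finset.card_product, Finset.card_range] at hcard
  calc 2^n ≤ 𝒜.card * (n+1) := hcard
  _ ≤ (n*H+1)^d * (n+1) := Nat.mul_le_mul_right _ h𝒜card
  _ = (n+1) * (n*H+1)^d := Nat.mul_comm _ _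
lemma step2 (a N HR : ℝ) (ha2 : 2 ≤ a) (hN1 : 1 ≤ N) (hH1 : 1 ≤ HR)
    (h : N ≤ a * Real.logb 2 (2*N*HR)) :
    N ≤ 2 * a * Real.logb 2 (2*Real.exp 1*a*HR) := by
  have hE2 : 2 ≤ Real.exp 1 := by
    have := Real.add_one_le_exp 1
    linarith
  have hl2 : (1:ℝ)/2 ≤ Real.log 2 := by
    have := Real.log_two_gt_d9
    linarith
  have hl2pos : 0 < Real.log 2 := by linarith
  have ha0 : a ≠ 0 := by linarith
  have hE0 : Real.exp 1 ≠ 0 := by linarith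
  have hl0 : Real.log 2 ≠ 0 := ne_of_gt hl2pos
  have hprod : 2*N*HR = (2*Real.exp 1*a*HR) * (N/(Real.exp 1*a)) := by
    field_simp
  have hsplit : Real.logb 2 (2*N*HR)
      = Real.logb 2 (2*Real.exp 1*a*HR) + Real.logb 2 (N/(Real.exp 1*a)) := by
    rw [hprod, Real.logb_mul (by positivity) (by positivity)]
  have hs : Real.logb 2 (N/(Real.exp 1*a))
      ≤ (N/(Real.exp 1*a))/Real.exp 1/Real.log 2 := by
    rw [Real.logb]
    have hlog := log_le_div_e (t := N/(Real.exp 1*a)) (by positivity)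
    exact div_le_div_of_nonneg_right hlog hl2pos.le
  have heq : a * ((N/(Real.exp 1*a))/Real.exp 1/Real.log 2)
      = N/(Real.exp 1*Real.exp 1*Real.log 2) := by
    field_simp
  have hfinal : N ≤ a * Real.logb 2 (2*Real.exp 1*a*HR)
      + N/(Real.exp 1*Real.exp 1*Real.log 2) := by
    have h2 := mul_le_mul_of_nonneg_left hs (by linarith : (0:ℝ) ≤ a)
    rw [heq] at h2
    calc N ≤ a * Real.logb 2 (2*N*HR) := h
    _ = a * Real.logb 2 (2*Real.exp 1*a*HR) + a * Real.logb 2 (N/(Real.exp 1*a)) := by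
        rw [hsplit]; ring
    _ ≤ _ := by linarith
  have hEE : 2 ≤ Real.exp 1*Real.exp 1*Real.log 2 := by nlinarith
  have hhalf : N/(Real.exp 1*Real.exp 1*Real.log 2) ≤ N/2 :=
    div_le_div_of_nonneg_left (by linarith) (by norm_num) hEE
  have c2 : (8:ℝ) ≤ 2*Real.exp 1*a := by nlinarith
  have c3 : (1:ℝ) ≤ 2*Real.exp 1*a*HR := by nlinarith
  have hLpos : 0 ≤ Real.logb 2 (2*Real.exp 1*a*HR) := Real.logb_nonneg (by norm_num) c3
  nlinarith [hfinal, hhalf]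

lemma analytic (H d n : ℕ) (hH : 1 ≤ H) (hd : 1 ≤ d) (hn : 1 ≤ n)
    (key : 2^n ≤ (n+1) * (n*H+1)^d) :
    (n:ℝ) ≤ 2*((d:ℝ)+1)*Real.logb 2 (2*Real.exp 1*((d:ℝ)+1)*(H:ℝ)) := by
  have hn1 : (1:ℝ) ≤ (n:ℝ) := by exact_mod_cast hn
  have hH1 : (1:ℝ) ≤ (H:ℝ) := by exact_mod_cast hH
  have hd1 : (1:ℝ) ≤ (d:ℝ) := by exact_mod_cast hd
  have hnat : 2^n ≤ (2*n*H)^(d+1) := by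
    calc 2^n ≤ (n+1) * (n*H+1)^d := key
    _ ≤ (2*n*H) * (2*n*H)^d :=
      Nat.mul_le_mul (by nlinarith) (Nat.pow_le_pow_left (by nlinarith) d)
    _ = (2*n*H)^(d+1) := (pow_succ' _ _).symm
  have hreal : (2:ℝ)^n ≤ (2*(n:ℝ)*(H:ℝ))^(d+1) := by exact_mod_cast hnat
  have hlog : (n:ℝ) ≤ ((d:ℝ)+1) * Real.logb 2 (2*(n:ℝ)*(H:ℝ)) := by
    have h1 : Real.logb 2 ((2:ℝ)^n) ≤ Real.logb 2 ((2*(n:ℝ)*(H:ℝ))^(d+1)) :=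
      Real.logb_le_logb_of_le (by norm_num) (by positivity) hreal
    rw [Real.logb_pow, Real.logb_pow, Real.logb_self_eq_one (by norm_num)] at h1
    push_cast at h1
    linarith
  exact step2 ((d:ℝ)+1) (n:ℝ) (H:ℝ) (by linarith) hn1 hH1 hlog

/-- Lemma 1 (explicit-constant form): the real-valued VC dimension of a VC-dimension-`d`
policy class, viewed through the indicator class `𝓗 = {I(π, Δ)}` on full trajectories of
horizon `H ≥ 1`, is at most `2·(d + 1)·log₂(2·e·(d + 1)·H)`. -/
theorem vc_r_bound {O : Type*} {H d : ℕ} (hH : 1 ≤ H) (hd : 1 ≤ d)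
    (P : Set (List O → Bool))
    (hVC : ∀ S : Finset (List O), S.card = d + 1 → ¬ ShattersLists P S)
    (g : List O → ℝ) :
    ∀ n : ℕ, 1 ≤ n →
      ∀ x : Fin n → (Fin H → O), Function.Injective x →
      (∀ b : Fin n → Bool, ∃ π ∈ P, ∃ Δ : ℝ,
          ∀ i : Fin n, (b i = true ↔ Δ ≤ policyReturn g π (x i))) →
      (n : ℝ) ≤ 2 * ((d : ℝ) + 1) * Real.logb 2 (2 * Real.exp 1 * ((d : ℝ) + 1) * H) := by
  intro n hn x _ hsh
  exact analytic H d n hH hd hn (counting hH P hVC g n x hsh)
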